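/- A filling of a Ferrers shape λ with exactly one 1 per column and a_i ones in row i avoids both 312 and 212 if and only if its blowup—obtained by replacing row i by a_i rows with the a_i ones rearranged in decreasing fashion (each 1 staying in its column, one 1 per new row)—is a 312-avoiding full rook placement of the blown-up shape. -/

import Mathlib

/-- Two lists of naturals are in the same relative order: equal length and
corresponding entries compare the same way (this also forces equalities to match). -/
def SameRelOrder (u v : List ℕ) : Prop :=
  u.length = v.length ∧
    ∀ i j, i < u.length → j < u.length →
      (u.getD i 0 < u.getD j 0 ↔ v.getD i 0 < v.getD j 0)

/-- The word `w` contains the pattern `x`. -/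
def WContains (w x : List ℕ) : Prop :=
  ∃ u : List ℕ, u.Sublist w ∧ SameRelOrder u x

/-- Number of words with exactly `a.getD i 0` letters `i+1` (letters are positive)
avoiding every pattern in `Ω`. -/
noncomputable def WordCount (a : List ℕ) (Ω : List (List ℕ)) : ℕ :=
  Nat.card {w : List ℕ // (∀ l ∈ w, 0 < l) ∧ (∀ i, w.count (i + 1) = a.getD i 0) ∧
    ∀ x ∈ Ω, ¬ WContains w x}

/-- A Ferrers shape: row lengths (listed bottom to top) are non-increasing and positive. -/
def IsFerrers (lam : List ℕ) : Prop :=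
  lam.Pairwise (· ≥ ·) ∧ ∀ t ∈ lam, 0 < t

/-- A 0-1-filling of the shape `lam` with one 1 per column, encoded as the function `f`
sending each column to the (0-based) row of its 1, contains the pattern `x`:
there are columns `c 0 < c 1 < ⋯` whose rows are in the same relative order as `x`
and such that the full submatrix on these rows and columns lies inside the shape. -/
def FContains (lam : List ℕ) {n : ℕ} (f : Fin n → ℕ) (x : List ℕ) : Prop :=
  ∃ c : Fin x.length → Fin n, StrictMono c ∧
    (∀ j k : Fin x.length, (f (c j) < f (c k) ↔ x.get j < x.get k)) ∧
    (∀ j k : Fin x.length, ((c k : ℕ)) < lam.getD (f (c j)) 0)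

/-- 0-1-fillings of the Ferrers shape `lam` with `n` columns, exactly one 1 in each column
(the 1 of column `c` lying in row `f c`, inside the shape), exactly `a.getD i 0` ones in
row `i`, avoiding all patterns in `Ω`. -/
def FillSet (n : ℕ) (lam a : List ℕ) (Ω : List (List ℕ)) : Set (Fin n → ℕ) :=
  {f | (∀ c : Fin n, (c : ℕ) < lam.getD (f c) 0) ∧
       (∀ i, (Finset.univ.filter fun c => f c = i).card = a.getD i 0) ∧
       ∀ x ∈ Ω, ¬ FContains lam f x}

/-- The number of 0-1-fillings of `lam` (with `lam.getD 0 0` columns, i.e. one column for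
each cell of the bottom row) with one 1 per column, `a.getD i 0` ones in row `i`, avoiding
all patterns in `Ω`. -/
noncomputable def FillingCount (lam a : List ℕ) (Ω : List (List ℕ)) : ℕ :=
  Nat.card (FillSet (lam.getD 0 0) lam a Ω)

/-- Two sets of patterns are shape-Wilf-equivalent for words. -/
def ShapeWilfEq (Ω Sig : List (List ℕ)) : Prop :=
  ∀ lam a : List ℕ, IsFerrers lam → a.length = lam.length → (∀ t ∈ a, 0 < t) →
    FillingCount lam a Ω = FillingCount lam a Sig

/-- The blown-up shape: row `i` of `lam` is replaced by `a.getD i 0` rows of its length. -/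
def blowShape (lam a : List ℕ) : List ℕ :=
  (List.range lam.length).flatMap fun i => List.replicate (a.getD i 0) (lam.getD i 0)

/-- Index of the bottom row of the `i`-th band in the blown-up shape. -/
def blowRow (a : List ℕ) (i : ℕ) : ℕ := (a.take i).sum

/-- The decreasing blowup of a filling: the 1 of column `c` is moved into the band of rows
of the blown-up shape replacing row `f c`, the ones of each band being arranged in
decreasing fashion (each 1 staying in its column). -/
def blowupDec {n : ℕ} (a : List ℕ) (f : Fin n → ℕ) : Fin n → ℕ := fun c =>
  blowRow a (f c) +
    (a.getD (f c) 0 - 1 - (Finset.univ.filter fun c' => f c' = f c ∧ c' < c).card)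

lemma blowRow_succ (a : List ℕ) (i : ℕ) : blowRow a (i+1) = blowRow a i + a.getD i 0 := by
  unfold blowRow
  rw [List.take_succ, List.sum_append, List.getD_eq_getElem?_getD]
  cases h : a[i]? <;> simp

lemma blowRow_mono (a : List ℕ) : Monotone (blowRow a) := by
  apply monotone_nat_of_le_succ
  intro i; rw [blowRow_succ]; omega

lemma flatlen (lam a : List ℕ) :
    ∀ m, ((List.range m).flatMap fun i => List.replicate (a.getD i 0) (lam.getD i 0)).length
      = blowRow a m := by
  intro m; induction m with
  | zero => simp [blowRow]
  | succ m ih =>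
    rw [List.range_succ, List.flatMap_append, List.flatMap_singleton, List.length_append, ih,
      List.length_replicate, blowRow_succ]

lemma blowShape_len (lam a : List ℕ) : (blowShape lam a).length = blowRow a lam.length :=
  flatlen lam a lam.length

lemma blowShape_getD (lam a : List ℕ) (i k : ℕ) (hi : i < lam.length) (hk : k < a.getD i 0) :
    (blowShape lam a).getD (blowRow a i + k) 0 = lam.getD i 0 := by
  have hsplit : blowShape lam a
      = (((List.range i).flatMap fun j => List.replicate (a.getD j 0) (lam.getD j 0))
          ++ List.replicate (a.getD i 0) (lam.getD i 0))
        ++ ((List.drop (i+1) (List.range lam.length)).flatMap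
            fun j => List.replicate (a.getD j 0) (lam.getD j 0)) := by
    show (List.range lam.length).flatMap _ = _
    conv_lhs => rw [← List.take_append_drop (i+1) (List.range lam.length)]
    rw [List.flatMap_append, List.take_range]
    have hmin : min (i+1) lam.length = i+1 := by omega
    rw [hmin, List.range_succ, List.flatMap_append, List.flatMap_singleton]
  have h1 : ((List.range i).flatMap fun j =>
      List.replicate (a.getD j 0) (lam.getD j 0)).length = blowRow a i := flatlen lam a i
  have h2 : (((List.range i).flatMap fun j => List.replicate (a.getD j 0) (lam.getD j 0))
      ++ List.replicate (a.getD i 0) (lam.getD i 0)).length = blowRow a i + a.getD i 0 := by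
    rw [List.length_append, h1, List.length_replicate]
  rw [hsplit, List.getD_append _ _ _ _ (by rw [h2]; omega),
    List.getD_append_right _ _ _ _ (by rw [h1]; omega), h1, Nat.add_sub_cancel_left,
    List.getD_eq_getElem?_getD, List.getElem?_replicate, if_pos hk, Option.getD_some]

lemma ord_iff_312 {β : Type} (F : β → ℕ) (c : Fin ([3,1,2] : List ℕ).length → β)
    (h1 : F (c ⟨1, by norm_num⟩) < F (c ⟨2, by norm_num⟩))
    (h2 : F (c ⟨2, by norm_num⟩) < F (c ⟨0, by norm_num⟩)) :
    ∀ j k, F (c j) < F (c k) ↔ ([3,1,2] : List ℕ).get j < ([3,1,2] : List ℕ).get k := by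
  intro j k
  fin_cases j <;> fin_cases k <;> simp_all <;> omega

lemma ord_iff_212 {β : Type} (F : β → ℕ) (c : Fin ([2,1,2] : List ℕ).length → β)
    (h1 : F (c ⟨1, by norm_num⟩) < F (c ⟨2, by norm_num⟩))
    (h2 : F (c ⟨0, by norm_num⟩) = F (c ⟨2, by norm_num⟩)) :
    ∀ j k, F (c j) < F (c k) ↔ ([2,1,2] : List ℕ).get j < ([2,1,2] : List ℕ).get k := by
  intro j k
  fin_cases j <;> fin_cases k <;> simp_all <;> omega

/-- A filling of `lam` with one 1 per column and `a.getD i 0` ones in row `i` avoids both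
312 and 212 if and only if its decreasing blowup is a 312-avoiding full rook placement of
the blown-up shape. -/
theorem stmt_13 (lam a : List ℕ) (hF : IsFerrers lam) (ha : a.length = lam.length)
    (hpos : ∀ t ∈ a, 0 < t) (n : ℕ) (hn : n = lam.getD 0 0) (hsum : a.sum = n)
    (f : Fin n → ℕ)
    (hvalid : ∀ c : Fin n, (c : ℕ) < lam.getD (f c) 0)
    (hcount : ∀ i, (Finset.univ.filter fun c => f c = i).card = a.getD i 0) :
    (¬ FContains lam f [3, 1, 2] ∧ ¬ FContains lam f [2, 1, 2]) ↔
      blowupDec a f ∈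
        FillSet n (blowShape lam a) (List.replicate (blowShape lam a).length 1)
          [[3, 1, 2]] := by
  classical
  have hrowlt : ∀ c : Fin n, f c < lam.length := by
    intro c
    by_contra h
    have h2 := hvalid c
    rw [List.getD_eq_default _ _ (le_of_not_gt h)] at h2
    omega
  have hrank : ∀ c : Fin n,
      (Finset.univ.filter fun c' => f c' = f c ∧ c' < c).card < a.getD (f c) 0 := by
    intro c
    rw [← hcount (f c)]
    apply Finset.card_lt_card
    constructor
    · intro x hx
      simp only [Finset.mem_filter] at *
      exact ⟨hx.1, hx.2.1⟩
    · intro hsub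
      have hc : c ∈ Finset.univ.filter fun c' => f c' = f c := by simp
      have := hsub hc
      simp at this
  have hband1 : ∀ c : Fin n, blowRow a (f c) ≤ blowupDec a f c := fun c => Nat.le_add_right _ _
  have hband2 : ∀ c : Fin n, blowupDec a f c < blowRow a (f c + 1) := by
    intro c
    rw [blowRow_succ]
    have := hrank c
    show blowRow a (f c) + (a.getD (f c) 0 - 1 - _) < _
    omega
  have hmonor : ∀ c c' : Fin n, f c < f c' → blowupDec a f c < blowupDec a f c' := by
    intro c c' h
    calc blowupDec a f c < blowRow a (f c + 1) := hband2 c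
      _ ≤ blowRow a (f c') := blowRow_mono a h
      _ ≤ blowupDec a f c' := hband1 c'
  have hsame : ∀ c c' : Fin n, f c = f c' → c < c' → blowupDec a f c' < blowupDec a f c := by
    intro c c' he hlt
    have key : (Finset.univ.filter fun c'' => f c'' = f c ∧ c'' < c).card
        < (Finset.univ.filter fun c'' => f c'' = f c' ∧ c'' < c').card := by
      apply Finset.card_lt_card
      constructor
      · intro x hx
        simp only [Finset.mem_filter] at *
        exact ⟨hx.1, he ▸ hx.2.1, hx.2.2.trans hlt⟩
      · intro hsub
        have hc : c ∈ Finset.univ.filter fun c'' => f c'' = f c' ∧ c'' < c' := by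
          simp [he.symm, hlt]
        have := hsub hc
        simp at this
    have h1 := hrank c'
    show blowRow a (f c') + (a.getD (f c') 0 - 1 - _)
        < blowRow a (f c) + (a.getD (f c) 0 - 1 - _)
    rw [← he] at h1 key ⊢
    omega
  have hrowle : ∀ c c' : Fin n, blowupDec a f c < blowupDec a f c' → f c ≤ f c' := by
    intro c c' h
    by_contra h2
    have := hmonor c' c (by omega)
    omega
  have hlamlen : blowRow a lam.length = n := by
    rw [← ha]
    show (a.take a.length).sum = n
    rw [List.take_length]
    exact hsum
  have hgn : ∀ c : Fin n, blowupDec a f c < n := by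
    intro c
    calc blowupDec a f c < blowRow a (f c + 1) := hband2 c
      _ ≤ blowRow a lam.length := blowRow_mono a (hrowlt c)
      _ = n := hlamlen
  have hginj : Function.Injective (blowupDec a f) := by
    intro c c' h
    have hf : f c = f c' := by
      by_contra hne
      rcases Nat.lt_or_ge (f c) (f c') with h1 | h1
      · have := hmonor c c' h1; omega
      · have := hmonor c' c (by omega); omega
    by_contra hne
    rcases lt_or_gt_of_ne hne with h1 | h1
    · have := hsame c c' hf h1; omega
    · have := hsame c' c hf.symm h1; omega
  have hgetD : ∀ c : Fin n, (blowShape lam a).getD (blowupDec a f c) 0 = lam.getD (f c) 0 := by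
    intro c
    have hk : a.getD (f c) 0 - 1
        - (Finset.univ.filter fun c' => f c' = f c ∧ c' < c).card < a.getD (f c) 0 := by
      have := hrank c; omega
    exact blowShape_getD lam a (f c) _ (hrowlt c) hk
  have hlen : (blowShape lam a).length = n := by rw [blowShape_len]; exact hlamlen
  constructor
  · rintro ⟨h312, h212⟩
    refine ⟨?_, ?_, ?_⟩
    · intro c
      show (c : ℕ) < (blowShape lam a).getD (blowupDec a f c) 0
      rw [hgetD]
      exact hvalid c
    · intro i
      show (Finset.univ.filter fun c => blowupDec a f c = i).card = _
      rw [hlen, List.getD_eq_getElem?_getD, List.getElem?_replicate]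
      by_cases hi : i < n
      · rw [if_pos hi]
        simp only [Option.getD_some]
        rw [Finset.card_eq_one]
        have hsurj : Function.Surjective (fun c : Fin n => (⟨blowupDec a f c, hgn c⟩ : Fin n)) := by
          rw [← Finite.injective_iff_surjective]
          intro c c' hcc
          exact hginj (congrArg Fin.val hcc)
        obtain ⟨c0, hc0⟩ := hsurj ⟨i, hi⟩
        have hc0' : blowupDec a f c0 = i := congrArg Fin.val hc0
        refine ⟨c0, ?_⟩
        ext x
        simp only [Finset.mem_filter, Finset.mem_univ, true_and, Finset.mem_singleton]
        constructor
        · intro hx; exact hginj (hx.trans hc0'.symm)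
        · rintro rfl; exact hc0'
      · rw [if_neg hi]
        simp only [Option.getD_none]
        rw [Finset.card_eq_zero, Finset.filter_eq_empty_iff]
        intro c _
        have := hgn c
        omega
    · intro x hx
      simp only [List.mem_singleton] at hx
      subst hx
      rintro ⟨c, hm, ho, hs⟩
      have g12 : blowupDec a f (c ⟨1, by norm_num⟩) < blowupDec a f (c ⟨2, by norm_num⟩) :=
        (ho _ _).mpr (by decide)
      have g20 : blowupDec a f (c ⟨2, by norm_num⟩) < blowupDec a f (c ⟨0, by norm_num⟩) :=
        (ho _ _).mpr (by decide)
      have hc01 : c ⟨0, by norm_num⟩ < c ⟨1, by norm_num⟩ := hm (by decide)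
      have hc12 : c ⟨1, by norm_num⟩ < c ⟨2, by norm_num⟩ := hm (by decide)
      have hc02 : c ⟨0, by norm_num⟩ < c ⟨2, by norm_num⟩ := hm (by decide)
      have hf12 : f (c ⟨1, by norm_num⟩) < f (c ⟨2, by norm_num⟩) := by
        rcases eq_or_lt_of_le (hrowle _ _ g12) with h | h
        · have := hsame _ _ h hc12
          omega
        · exact h
      have hf20 : f (c ⟨2, by norm_num⟩) ≤ f (c ⟨0, by norm_num⟩) := hrowle _ _ g20
      have hsub : ∀ j k, ((c k : ℕ)) < lam.getD (f (c j)) 0 := by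
        intro j k
        have := hs j k
        rwa [hgetD] at this
      rcases eq_or_lt_of_le hf20 with h | h
      · exact h212 ⟨c, hm, ord_iff_212 f c hf12 h.symm, hsub⟩
      · exact h312 ⟨c, hm, ord_iff_312 f c hf12 h, hsub⟩
  · rintro ⟨-, -, havoid⟩
    have hav : ¬ FContains (blowShape lam a) (blowupDec a f) [3, 1, 2] :=
      havoid _ (by simp)
    constructor
    · rintro ⟨c, hm, ho, hs⟩
      apply hav
      have hf12 : f (c ⟨1, by norm_num⟩) < f (c ⟨2, by norm_num⟩) := (ho _ _).mpr (by decide)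
      have hf20 : f (c ⟨2, by norm_num⟩) < f (c ⟨0, by norm_num⟩) := (ho _ _).mpr (by decide)
      refine ⟨c, hm, ord_iff_312 (blowupDec a f) c (hmonor _ _ hf12) (hmonor _ _ hf20), ?_⟩
      intro j k
      rw [hgetD]
      exact hs j k
    · rintro ⟨c, hm, ho, hs⟩
      apply hav
      have hf12 : f (c ⟨1, by norm_num⟩) < f (c ⟨2, by norm_num⟩) := (ho _ _).mpr (by decide)
      have hf02 : f (c ⟨0, by norm_num⟩) = f (c ⟨2, by norm_num⟩) := by
        have h1 : ¬ f (c ⟨0, by norm_num⟩) < f (c ⟨2, by norm_num⟩) := by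
          intro h
          exact absurd ((ho _ _).mp h) (by decide)
        have h2 : ¬ f (c ⟨2, by norm_num⟩) < f (c ⟨0, by norm_num⟩) := by
          intro h
          exact absurd ((ho _ _).mp h) (by decide)
        omega
      have hc02 : c ⟨0, by norm_num⟩ < c ⟨2, by norm_num⟩ := hm (by decide)
      refine ⟨c, hm, ord_iff_312 (blowupDec a f) c (hmonor _ _ hf12) (hsame _ _ hf02 hc02), ?_⟩
      intro j k
      rw [hgetD]
      exact hs j k
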